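/- Let n ≥ 1, let A₁ be a positive definite symmetric n×n real matrix and A₂ a symmetric n×n real matrix, and let ‖·‖ denote the Euclidean operator norm. Then ‖A₂‖ ≤ ‖A₁‖ · [tr(A₁⁻¹A₂A₁⁻¹A₂)]^{1/2}. -/

import Mathlib

/-- The Euclidean norm of a vector in `ℝⁿ`. -/
noncomputable def euclNorm {n : ℕ} (x : Fin n → ℝ) : ℝ := Real.sqrt (∑ i, x i ^ 2)

/-- The Euclidean operator norm `‖A‖ = sup_{x ≠ 0} ‖Ax‖/‖x‖` of an `n×n` real matrix. -/
noncomputable def euclOpNorm {n : ℕ} (A : Matrix (Fin n) (Fin n) ℝ) : ℝ :=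
  sSup ((fun x : Fin n → ℝ => euclNorm (A.mulVec x) / euclNorm x) '' {x : Fin n → ℝ | x ≠ 0})

open scoped Matrix.Norms.L2Operator
open Matrix
open scoped MatrixOrder

lemma euclNorm_eq {n : ℕ} (v : Fin n → ℝ) :
    euclNorm v = ‖(WithLp.equiv 2 (Fin n → ℝ)).symm v‖ := by
  rw [EuclideanSpace.norm_eq, euclNorm]
  congr 1
  exact Finset.sum_congr rfl fun i _ => by simp [sq_abs]

lemma euclNorm_nonneg {n : ℕ} (v : Fin n → ℝ) : 0 ≤ euclNorm v := Real.sqrt_nonneg _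

lemma euclNorm_pos {n : ℕ} {v : Fin n → ℝ} (hv : v ≠ 0) : 0 < euclNorm v := by
  rw [euclNorm_eq, norm_pos_iff]; simpa using hv

lemma euclNorm_sq {n : ℕ} (v : Fin n → ℝ) : euclNorm v ^ 2 = dotProduct v v := by
  rw [euclNorm, Real.sq_sqrt (by positivity)]
  simp [dotProduct, sq]

lemma euclNorm_mulVec_le {n : ℕ} (A : Matrix (Fin n) (Fin n) ℝ) (v : Fin n → ℝ) :
    euclNorm (A.mulVec v) ≤ ‖A‖ * euclNorm v := by
  rw [euclNorm_eq, euclNorm_eq]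
  exact Matrix.l2_opNorm_mulVec A ((WithLp.equiv 2 (Fin n → ℝ)).symm v)

lemma euclOpNorm_eq {n : ℕ} (hn : 1 ≤ n) (A : Matrix (Fin n) (Fin n) ℝ) :
    euclOpNorm A = ‖A‖ := by
  have hne : ({x : Fin n → ℝ | x ≠ 0}).Nonempty := by
    refine ⟨Pi.single ⟨0, hn⟩ 1, ?_⟩
    simp only [Set.mem_setOf_eq]
    intro h
    have := congrFun h ⟨0, hn⟩
    simp at this
  have hub : ∀ y ∈ ((fun x : Fin n → ℝ => euclNorm (A.mulVec x) / euclNorm x) ''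
      {x : Fin n → ℝ | x ≠ 0}), y ≤ ‖A‖ := by
    rintro y ⟨x, hx, rfl⟩
    rw [div_le_iff₀ (euclNorm_pos hx)]
    exact euclNorm_mulVec_le A x
  apply le_antisymm
  · exact Real.sSup_le hub (norm_nonneg A)
  · have hbdd : BddAbove ((fun x : Fin n → ℝ => euclNorm (A.mulVec x) / euclNorm x) ''
        {x : Fin n → ℝ | x ≠ 0}) := ⟨‖A‖, hub⟩
    have hsup_nonneg : 0 ≤ euclOpNorm A := by
      obtain ⟨x, hx⟩ := hne
      refine le_trans ?_ (le_csSup hbdd ⟨x, hx, rfl⟩)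
      exact div_nonneg (euclNorm_nonneg _) (euclNorm_nonneg _)
    rw [Matrix.l2_opNorm_def]
    apply ContinuousLinearMap.opNorm_le_bound _ hsup_nonneg
    intro y
    by_cases hy : y = 0
    · simp [hy]
    · have hy' : (WithLp.equiv 2 (Fin n → ℝ)) y ≠ 0 := by simpa using hy
      have key : euclNorm (A.mulVec (WithLp.equiv 2 (Fin n → ℝ) y)) /
          euclNorm (WithLp.equiv 2 (Fin n → ℝ) y) ≤ euclOpNorm A :=
        le_csSup hbdd ⟨_, hy', rfl⟩
      have h1 : euclNorm (WithLp.equiv 2 (Fin n → ℝ) y) = ‖y‖ := by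
        rw [euclNorm_eq]; congr 1
      have h2 : euclNorm (A.mulVec (WithLp.equiv 2 (Fin n → ℝ) y)) =
          ‖(Matrix.toEuclideanLin.trans LinearMap.toContinuousLinearMap A) y‖ := by
        rw [euclNorm_eq]; congr 1
      rw [h1, div_le_iff₀ (by rw [← h1]; exact euclNorm_pos (by simpa using hy'))] at key
      rw [← h2]
      exact key.trans_eq rfl

lemma real_conjTranspose_eq {n : ℕ} (A : Matrix (Fin n) (Fin n) ℝ) : Aᴴ = Aᵀ := by
  ext i j; simp [Matrix.conjTranspose_apply]

lemma psd_diag_nonneg {n : ℕ} {M : Matrix (Fin n) (Fin n) ℝ} (h : M.PosSemidef) (i : Fin n) :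
    0 ≤ M i i := by
  have := h.dotProduct_mulVec_nonneg (Pi.single i 1)
  simpa [dotProduct, Matrix.mulVec, Pi.single_apply] using this

lemma psd_trace_nonneg {n : ℕ} {P Q : Matrix (Fin n) (Fin n) ℝ}
    (hP : P.PosSemidef) (hQ : Q.PosSemidef) : 0 ≤ (P * Q).trace := by
  obtain ⟨B, rfl⟩ := CStarAlgebra.nonneg_iff_eq_star_mul_self.mp hP.nonneg
  rw [Matrix.mul_assoc, Matrix.trace_mul_comm]
  have hpsd : ((B * Q) * Bᴴ).PosSemidef := hQ.mul_mul_conjTranspose_same B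
  rw [Matrix.trace]
  exact Finset.sum_nonneg fun i _ => psd_diag_nonneg hpsd i

/-- Key quadratic bound: for `A` psd, `‖A w‖² ≤ ‖A‖ ⟨w, A w⟩`. -/
lemma mulVec_sq_le {n : ℕ} {A : Matrix (Fin n) (Fin n) ℝ} (hA : A.PosSemidef)
    (w : Fin n → ℝ) :
    euclNorm (A.mulVec w) ^ 2 ≤ ‖A‖ * dotProduct w (A.mulVec w) := by
  classical
  set S := CFC.sqrt A with hSdef
  have hSS : S * S = A := CFC.sqrt_mul_sqrt_self A hA.nonneg
  have hSsymm : Sᵀ = S := by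
    rw [← real_conjTranspose_eq]; exact (CFC.sqrt_nonneg A).posSemidef.1
  have hAv : A.mulVec w = S.mulVec (S.mulVec w) := by
    rw [← hSS, ← Matrix.mulVec_mulVec]
  have hdot : dotProduct w (A.mulVec w)
      = dotProduct (S.mulVec w) (S.mulVec w) := by
    rw [← hSS, ← Matrix.mulVec_mulVec, Matrix.dotProduct_mulVec, ← Matrix.mulVec_transpose,
      hSsymm]
  have hnorm : ‖S‖ * ‖S‖ = ‖A‖ := by
    have := Matrix.l2_opNorm_conjTranspose_mul_self S
    rw [real_conjTranspose_eq, hSsymm, hSS] at this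
    exact this.symm
  calc euclNorm (A.mulVec w) ^ 2
      = euclNorm (S.mulVec (S.mulVec w)) ^ 2 := by rw [hAv]
    _ ≤ (‖S‖ * euclNorm (S.mulVec w)) ^ 2 := by
        apply pow_le_pow_left₀ (euclNorm_nonneg _) (euclNorm_mulVec_le _ _)
    _ = (‖S‖ * ‖S‖) * euclNorm (S.mulVec w) ^ 2 := by ring
    _ = ‖A‖ * dotProduct w (A.mulVec w) := by rw [hnorm, euclNorm_sq, hdot]

/-- Loewner bound `‖A‖ • A⁻¹ - 1` is psd for `A` posdef symmetric. -/
lemma loewner_inv {n : ℕ} {A : Matrix (Fin n) (Fin n) ℝ} (hA : A.PosDef) :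
    (‖A‖ • A⁻¹ - 1).PosSemidef := by
  classical
  have hMpd : A⁻¹.PosDef := hA.inv
  have hdet : IsUnit A.det := isUnit_iff_ne_zero.mpr (ne_of_gt hA.det_pos)
  refine Matrix.PosSemidef.of_dotProduct_mulVec_nonneg ?_ ?_
  · show (‖A‖ • A⁻¹ - 1)ᴴ = _
    rw [Matrix.conjTranspose_sub, Matrix.conjTranspose_smul, Matrix.conjTranspose_one,
      hMpd.1.eq, star_trivial]
  · intro x
    have hxw : A.mulVec (A⁻¹.mulVec x) = x := by
      rw [Matrix.mulVec_mulVec, Matrix.mul_nonsing_inv _ hdet, Matrix.one_mulVec]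
    set w := A⁻¹.mulVec x with hw
    have h1 : dotProduct x (A⁻¹.mulVec x) = dotProduct w (A.mulVec w) := by
      rw [← hw]
      conv_lhs => rw [← hxw]
      rw [dotProduct_comm]
    have h2 : dotProduct x x = euclNorm (A.mulVec w) ^ 2 := by
      rw [hxw, euclNorm_sq]
    have key := mulVec_sq_le hA.posSemidef w
    have : dotProduct (star x) ((‖A‖ • A⁻¹ - 1).mulVec x)
        = ‖A‖ * dotProduct x (A⁻¹.mulVec x) - dotProduct x x := by
      simp [Matrix.sub_mulVec, Matrix.smul_mulVec, dotProduct_sub,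
        dotProduct_smul, Matrix.one_mulVec, smul_eq_mul]
    rw [this, h1, h2]
    linarith

lemma opnorm_sq_le_trace {n : ℕ} (A : Matrix (Fin n) (Fin n) ℝ) :
    ‖A‖ ^ 2 ≤ (Aᵀ * A).trace := by
  classical
  set t := (Aᵀ * A).trace with ht
  have htval : t = ∑ j, ∑ i, A i j ^ 2 := by
    simp [ht, Matrix.trace, Matrix.mul_apply, Matrix.diag, sq]
  have htnn : 0 ≤ t := by rw [htval]; positivity
  have hbound : ∀ v : Fin n → ℝ, euclNorm (A.mulVec v) ≤ Real.sqrt t * euclNorm v := by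
    intro v
    have hsq : euclNorm (A.mulVec v) ^ 2 ≤ t * euclNorm v ^ 2 := by
      rw [euclNorm, Real.sq_sqrt (by positivity), euclNorm, Real.sq_sqrt (by positivity)]
      calc ∑ i, (A.mulVec v) i ^ 2
          = ∑ i, (∑ j, A i j * v j) ^ 2 := by simp [Matrix.mulVec, dotProduct]
        _ ≤ ∑ i, (∑ j, A i j ^ 2) * (∑ j, v j ^ 2) :=
            Finset.sum_le_sum fun i _ => Finset.sum_mul_sq_le_sq_mul_sq _ _ _
        _ = t * ∑ j, v j ^ 2 := by rw [← Finset.sum_mul, htval, Finset.sum_comm]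
    have h := Real.sqrt_le_sqrt hsq
    rwa [Real.sqrt_sq (euclNorm_nonneg _), Real.sqrt_mul htnn,
      Real.sqrt_sq (euclNorm_nonneg _)] at h
  have hA_le : ‖A‖ ≤ Real.sqrt t := by
    rw [Matrix.l2_opNorm_def]
    apply ContinuousLinearMap.opNorm_le_bound _ (Real.sqrt_nonneg t)
    intro y
    have h1 : euclNorm (WithLp.equiv 2 (Fin n → ℝ) y) = ‖y‖ := by
      rw [euclNorm_eq]; congr 1
    have h2 : euclNorm (A.mulVec (WithLp.equiv 2 (Fin n → ℝ) y)) =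
        ‖(Matrix.toEuclideanLin.trans LinearMap.toContinuousLinearMap A) y‖ := by
      rw [euclNorm_eq]; congr 1
    rw [← h1, ← h2]
    exact hbound _
  calc ‖A‖ ^ 2 ≤ Real.sqrt t ^ 2 := pow_le_pow_left₀ (norm_nonneg _) hA_le 2
    _ = t := Real.sq_sqrt htnn

/-- Inequality (2.28) of the paper: for `A₁` positive definite symmetric and `A₂`
symmetric, `‖A₂‖ ≤ ‖A₁‖ · [tr(A₁⁻¹A₂A₁⁻¹A₂)]^{1/2}`. -/
theorem stmt_14 (n : ℕ) (hn : 1 ≤ n) (A₁ A₂ : Matrix (Fin n) (Fin n) ℝ)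
    (h₁symm : A₁.IsSymm) (h₁pos : A₁.PosDef) (h₂symm : A₂.IsSymm) :
    euclOpNorm A₂ ≤ euclOpNorm A₁ * Real.sqrt ((A₁⁻¹ * A₂ * A₁⁻¹ * A₂).trace) := by
  classical
  rw [euclOpNorm_eq hn, euclOpNorm_eq hn]
  set M := A₁⁻¹ with hM'
  set c := ‖A₁‖ with hc'
  set τ := (M * A₂ * M * A₂).trace with hτ'
  have hMpsd : M.PosSemidef := h₁pos.inv.posSemidef
  have hA₂H : A₂ᴴ = A₂ := by rw [real_conjTranspose_eq]; exact h₂symm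
  have hP₁ : (A₂ * M * A₂).PosSemidef := by
    have := hMpsd.mul_mul_conjTranspose_same A₂
    rwa [hA₂H] at this
  have hP₂ : (A₂ * A₂).PosSemidef := by
    have := Matrix.posSemidef_conjTranspose_mul_self A₂
    rwa [hA₂H] at this
  have hD : (c • M - 1).PosSemidef := loewner_inv h₁pos
  have hcnn : 0 ≤ c := norm_nonneg _
  -- expand traces
  have expand : ∀ P : Matrix (Fin n) (Fin n) ℝ, ((c • M - 1) * P).trace
      = c * (M * P).trace - P.trace := by
    intro P
    rw [Matrix.sub_mul, Matrix.smul_mul, Matrix.trace_sub, Matrix.trace_smul, Matrix.one_mul,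
      smul_eq_mul]
  have hMP₁ : M * (A₂ * M * A₂) = M * A₂ * M * A₂ := by
    noncomm_ring
  have hτnn : 0 ≤ τ := by
    rw [hτ', ← hMP₁]
    exact psd_trace_nonneg hMpsd hP₁
  have step1 : (A₂ * M * A₂).trace ≤ c * τ := by
    have h0 := psd_trace_nonneg hD hP₁
    rw [expand, hMP₁] at h0
    linarith
  have link : (A₂ * M * A₂).trace = (M * (A₂ * A₂)).trace := by
    rw [Matrix.trace_mul_comm, ← Matrix.mul_assoc, Matrix.trace_mul_comm]
  have step2 : (A₂ * A₂).trace ≤ c * (A₂ * M * A₂).trace := by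
    have h0 := psd_trace_nonneg hD hP₂
    rw [expand, ← link] at h0
    linarith
  have hfro : ‖A₂‖ ^ 2 ≤ (A₂ * A₂).trace := by
    have := opnorm_sq_le_trace A₂
    rwa [h₂symm.eq] at this
  have final : ‖A₂‖ ^ 2 ≤ c ^ 2 * τ := by
    calc ‖A₂‖ ^ 2 ≤ (A₂ * A₂).trace := hfro
      _ ≤ c * (A₂ * M * A₂).trace := step2
      _ ≤ c * (c * τ) := by
          apply mul_le_mul_of_nonneg_left step1 hcnn
      _ = c ^ 2 * τ := by ring
  calc ‖A₂‖ = Real.sqrt (‖A₂‖ ^ 2) := (Real.sqrt_sq (norm_nonneg _)).symm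
    _ ≤ Real.sqrt (c ^ 2 * τ) := Real.sqrt_le_sqrt final
    _ = c * Real.sqrt τ := by
        rw [Real.sqrt_mul (sq_nonneg c), Real.sqrt_sq hcnn]
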